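/- arXiv:2301.04462 — 5 statements merged into one kernel-verified Lean document; each statement's English description precedes it below -/
import Mathlib

section
/- Principal submatrices of the resolvent of a strictly substochastic matrix: let Q₁ ∈ ℝ^{n×n} be strictly substochastic (all entries nonnegative and every row sum strictly less than 1), and let K ⊆ {1,…,n}. Then I − Q₁ is invertible, and there exists a strictly substochastic matrix Q₂ ∈ ℝ^{K×K} such that the principal submatrix of (I − Q₁)⁻¹ on the rows and columns indexed by K equals (I − Q₂)⁻¹. -/
open Matrix

lemma aux_nonneg {ι : Type*} [Fintype ι] (Q : Matrix ι ι ℝ)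
    (hQ0 : ∀ i j, 0 ≤ Q i j) (hQs : ∀ i, ∑ j, Q i j < 1)
    (x c : ι → ℝ) (hx : ∀ i, x i = ∑ j, Q i j * x j + c i) (hc : ∀ i, 0 ≤ c i) :
    ∀ i, 0 ≤ x i := by
  by_contra h
  push_neg at h
  obtain ⟨i, hi⟩ := h
  obtain ⟨i₀, -, hmin⟩ := Finset.exists_min_image Finset.univ x ⟨i, Finset.mem_univ i⟩
  have hneg : x i₀ < 0 := lt_of_le_of_lt (hmin i (Finset.mem_univ i)) hi
  have h1 : (∑ j, Q i₀ j) * x i₀ ≤ ∑ j, Q i₀ j * x j := by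
    rw [Finset.sum_mul]
    exact Finset.sum_le_sum fun j _ =>
      mul_le_mul_of_nonneg_left (hmin j (Finset.mem_univ j)) (hQ0 i₀ j)
  nlinarith [hx i₀, hc i₀, hQs i₀]

lemma aux_le_one {ι : Type*} [Fintype ι] (Q : Matrix ι ι ℝ)
    (hQ0 : ∀ i j, 0 ≤ Q i j)
    (x c : ι → ℝ) (hx : ∀ i, x i = ∑ j, Q i j * x j + c i) (hc : ∀ i, 0 ≤ c i)
    (hs : ∀ i, (∑ j, Q i j) + c i < 1) : ∀ i, x i ≤ 1 := by
  by_contra h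
  push_neg at h
  obtain ⟨i, hi⟩ := h
  obtain ⟨i₀, -, hmax⟩ := Finset.exists_max_image Finset.univ x ⟨i, Finset.mem_univ i⟩
  have hgt : 1 < x i₀ := lt_of_lt_of_le hi (hmax i (Finset.mem_univ i))
  have h1 : ∑ j, Q i₀ j * x j ≤ (∑ j, Q i₀ j) * x i₀ := by
    rw [Finset.sum_mul]
    exact Finset.sum_le_sum fun j _ =>
      mul_le_mul_of_nonneg_left (hmax j (Finset.mem_univ j)) (hQ0 i₀ j)
  have h2 : 0 ≤ ∑ j, Q i₀ j := Finset.sum_nonneg fun j _ => hQ0 i₀ j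
  nlinarith [hx i₀, hc i₀, hs i₀]

lemma aux_isUnit {ι : Type*} [Fintype ι] [DecidableEq ι] (Q : Matrix ι ι ℝ)
    (hQ0 : ∀ i j, 0 ≤ Q i j) (hQs : ∀ i, ∑ j, Q i j < 1) : IsUnit (1 - Q) := by
  rw [← Matrix.mulVec_injective_iff_isUnit]
  have key : ∀ z : ι → ℝ, (1 - Q) *ᵥ z = 0 → ∀ i, z i = ∑ j, Q i j * z j + (0 : ι → ℝ) i := by
    intro z h0 i
    rw [Matrix.sub_mulVec, Matrix.one_mulVec] at h0
    have h := congrFun h0 i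
    simp only [Pi.sub_apply, Pi.zero_apply, Matrix.mulVec, dotProduct] at h ⊢
    linarith
  intro x y hxy
  have h0 : (1 - Q) *ᵥ (x - y) = 0 := by rw [Matrix.mulVec_sub, hxy, sub_self]
  have h0' : (1 - Q) *ᵥ (-(x - y)) = 0 := by rw [Matrix.mulVec_neg, h0, neg_zero]
  have h1 := aux_nonneg Q hQ0 hQs (x - y) 0 (key _ h0) (fun _ => le_refl 0)
  have h2 := aux_nonneg Q hQ0 hQs (-(x - y)) 0 (key _ h0') (fun _ => le_refl 0)
  funext i
  have a := h1 i; have b := h2 i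
  simp only [Pi.sub_apply, Pi.neg_apply] at a b
  linarith

/-- A matrix is strictly substochastic if all entries are nonnegative and every row sum is
strictly less than 1. -/
def IsStrictlySubstochastic {ι : Type*} [Fintype ι] (Q : Matrix ι ι ℝ) : Prop :=
  (∀ i j, 0 ≤ Q i j) ∧ ∀ i, ∑ j, Q i j < 1

/-- For a strictly substochastic matrix `Q₁`, `I - Q₁` is invertible, and any
principal submatrix of `(I - Q₁)⁻¹` on an index set `K` is of the form `(I - Q₂)⁻¹` for some
strictly substochastic matrix `Q₂` on `K`. -/
theorem substochastic_resolvent_principal_submatrix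
    {n : ℕ} (Q₁ : Matrix (Fin n) (Fin n) ℝ) (hQ₁ : IsStrictlySubstochastic Q₁)
    (K : Finset (Fin n)) :
    IsUnit (1 - Q₁) ∧
    ∃ Q₂ : Matrix {i // i ∈ K} {i // i ∈ K} ℝ, IsStrictlySubstochastic Q₂ ∧
      ((1 - Q₁)⁻¹).submatrix (Subtype.val) (Subtype.val) = (1 - Q₂)⁻¹ := by
  obtain ⟨hQ0, hQs⟩ := hQ₁
  have hU : IsUnit (1 - Q₁) := aux_isUnit Q₁ hQ0 hQs
  refine ⟨hU, ?_⟩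
  set e : ({i // i ∈ K} ⊕ {i // ¬ i ∈ K}) ≃ Fin n :=
    Equiv.sumCompl (fun i : Fin n => i ∈ K) with he
  have hsplit : ∀ f : Fin n → ℝ,
      (∑ a : {i // i ∈ K}, f a.val) + (∑ b : {i // ¬ i ∈ K}, f b.val) = ∑ j, f j := by
    intro f
    rw [← Equiv.sum_comp e f, Fintype.sum_sum_type]
    simp [he]
  set QA : Matrix {i // i ∈ K} {i // i ∈ K} ℝ :=
    Q₁.submatrix Subtype.val Subtype.val with hQA
  set QB : Matrix {i // i ∈ K} {i // ¬ i ∈ K} ℝ :=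
    Q₁.submatrix Subtype.val Subtype.val with hQB
  set QC : Matrix {i // ¬ i ∈ K} {i // i ∈ K} ℝ :=
    Q₁.submatrix Subtype.val Subtype.val with hQC
  set QD : Matrix {i // ¬ i ∈ K} {i // ¬ i ∈ K} ℝ :=
    Q₁.submatrix Subtype.val Subtype.val with hQD
  have hD0 : ∀ i j, 0 ≤ QD i j := fun i j => hQ0 _ _
  have hQDs : ∀ i : {i // ¬ i ∈ K}, ∑ j, QD i j < 1 := by
    intro i
    have h := hsplit (Q₁ i.val)
    have hnn : 0 ≤ ∑ a : {i // i ∈ K}, Q₁ i.val a.val :=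
      Finset.sum_nonneg fun a _ => hQ0 _ _
    have h2 := hQs i.val
    show ∑ j : {i // ¬ i ∈ K}, Q₁ i.val j.val < 1
    linarith
  haveI iD : Invertible (1 - QD) := (aux_isUnit QD hD0 hQDs).invertible
  set E : Matrix {i // ¬ i ∈ K} {i // ¬ i ∈ K} ℝ := ⅟(1 - QD) with hEdef
  have hN : (1 - Q₁).submatrix e e
      = Matrix.fromBlocks (1 - QA) (-QB) (-QC) (1 - QD) := by
    ext i j
    rcases i with i | i <;> rcases j with j | j
    · have : (i : Fin n) = j ↔ i = j := Subtype.val_inj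
      simp [Matrix.submatrix_apply, he, Matrix.sub_apply, Matrix.one_apply, this, hQA, hQB, hQC, hQD]
    · have hne : (i : Fin n) ≠ j := fun h => j.2 (h ▸ i.2)
      simp [Matrix.submatrix_apply, he, Matrix.sub_apply, Matrix.one_apply_ne hne, hQA, hQB, hQC, hQD]
    · have hne : (i : Fin n) ≠ j := fun h => i.2 (h ▸ j.2)
      simp [Matrix.submatrix_apply, he, Matrix.sub_apply, Matrix.one_apply_ne hne, hQA, hQB, hQC, hQD]
    · have : (i : Fin n) = j ↔ i = j := Subtype.val_inj
      simp [Matrix.submatrix_apply, he, Matrix.sub_apply, Matrix.one_apply, this, hQA, hQB, hQC, hQD]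
  haveI iN : Invertible ((1 - Q₁).submatrix e e) := by
    haveI := hU.invertible
    exact Matrix.submatrixEquivInvertible _ e e
  haveI iFB : Invertible (Matrix.fromBlocks (1 - QA) (-QB) (-QC) (1 - QD)) := hN ▸ iN
  haveI iS : Invertible ((1 - QA) - (-QB) * E * (-QC)) :=
    Matrix.invertibleOfFromBlocks₂₂Invertible _ _ _ _
  set Q₂ : Matrix {i // i ∈ K} {i // i ∈ K} ℝ := QA + QB * (E * QC) with hQ₂def
  have hS : (1 - QA) - (-QB) * E * (-QC) = 1 - Q₂ := by
    rw [hQ₂def, Matrix.neg_mul, Matrix.neg_mul, Matrix.mul_neg, neg_neg, Matrix.mul_assoc,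
      sub_sub]
  haveI iS2 : Invertible (1 - Q₂) := hS ▸ iS
  -- entrywise nonnegativity of E
  have hDE : E = QD * E + 1 := by
    have h := mul_invOf_self (1 - QD)
    rw [sub_mul, one_mul, sub_eq_iff_eq_add] at h
    rw [← hEdef] at h
    exact h.trans (add_comm _ _)
  have hE0 : ∀ k l, 0 ≤ E k l := by
    intro k l
    refine aux_nonneg QD hD0 hQDs (fun m => E m l)
      (fun m => (1 : Matrix {i // ¬ i ∈ K} {i // ¬ i ∈ K} ℝ) m l) ?_ ?_ k
    · intro m
      have h := congrFun (congrFun hDE m) l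
      simp only [Matrix.add_apply, Matrix.mul_apply] at h
      exact h
    · intro m
      by_cases h : m = l <;> simp [Matrix.one_apply, h]
  set u : {i // ¬ i ∈ K} → ℝ := fun k => ∑ j, (E * QC) k j with hu_def
  have hEQC : E * QC = QD * (E * QC) + QC := by
    calc E * QC = (QD * E + 1) * QC := by rw [← hDE]
    _ = QD * (E * QC) + QC := by rw [Matrix.add_mul, Matrix.one_mul, Matrix.mul_assoc]
  have hu : ∀ k, u k = ∑ l, QD k l * u l + (∑ j : {i // i ∈ K}, QC k j) := by
    intro k
    calc u k = ∑ j, (QD * (E * QC) + QC) k j := by rw [hu_def, ← hEQC]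
    _ = (∑ j, (QD * (E * QC)) k j) + ∑ j, QC k j := by
        simp [Matrix.add_apply, Finset.sum_add_distrib]
    _ = (∑ l, QD k l * u l) + ∑ j, QC k j := by
        congr 1
        calc ∑ j, (QD * (E * QC)) k j = ∑ j, ∑ l, QD k l * (E * QC) l j := by
              simp [Matrix.mul_apply]
        _ = ∑ l, ∑ j, QD k l * (E * QC) l j := Finset.sum_comm
        _ = ∑ l, QD k l * u l := by
              simp [hu_def, Finset.mul_sum]
  have hc0 : ∀ k : {i // ¬ i ∈ K}, 0 ≤ ∑ j : {i // i ∈ K}, QC k j :=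
    fun k => Finset.sum_nonneg fun j _ => hQ0 _ _
  have hrow : ∀ k : {i // ¬ i ∈ K},
      (∑ l, QD k l) + (∑ j : {i // i ∈ K}, QC k j) < 1 := by
    intro k
    have h := hsplit (Q₁ k.val)
    have h2 := hQs k.val
    show (∑ l : {i // ¬ i ∈ K}, Q₁ k.val l.val)
      + (∑ j : {i // i ∈ K}, Q₁ k.val j.val) < 1
    linarith
  have hu1 : ∀ k, u k ≤ 1 := aux_le_one QD hD0 u _ hu hc0 hrow
  refine ⟨Q₂, ⟨?_, ?_⟩, ?_⟩
  · intro i j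
    show 0 ≤ QA i j + (QB * (E * QC)) i j
    have h1 : 0 ≤ (QB * (E * QC)) i j := by
      rw [Matrix.mul_apply]
      refine Finset.sum_nonneg fun k _ => mul_nonneg (hQ0 _ _) ?_
      rw [Matrix.mul_apply]
      exact Finset.sum_nonneg fun l _ => mul_nonneg (hE0 _ _) (hQ0 _ _)
    have h2 : 0 ≤ QA i j := hQ0 _ _
    linarith
  · intro i
    have hsum : ∑ j, Q₂ i j
        = (∑ j : {i // i ∈ K}, QA i j) + ∑ k : {i // ¬ i ∈ K}, QB i k * u k := by
      simp only [hQ₂def, Matrix.add_apply, Finset.sum_add_distrib]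
      congr 1
      calc ∑ j, (QB * (E * QC)) i j = ∑ j, ∑ k, QB i k * (E * QC) k j := by
            simp [Matrix.mul_apply]
      _ = ∑ k, ∑ j, QB i k * (E * QC) k j := Finset.sum_comm
      _ = ∑ k, QB i k * u k := by
            simp [hu_def, Finset.mul_sum]
    have h1 : ∑ k : {i // ¬ i ∈ K}, QB i k * u k ≤ ∑ k : {i // ¬ i ∈ K}, QB i k := by
      refine Finset.sum_le_sum fun k _ => ?_
      have := mul_le_mul_of_nonneg_left (hu1 k) (hQ0 i.val k.val)
      rw [mul_one] at this
      exact this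
    have h2 := hsplit (Q₁ i.val)
    have h3 := hQs i.val
    have e1 : ∑ j : {i // i ∈ K}, QA i j = ∑ a : {i // i ∈ K}, Q₁ i.val a.val := rfl
    have e2 : ∑ k : {i // ¬ i ∈ K}, QB i k = ∑ b : {i // ¬ i ∈ K}, Q₁ i.val b.val := rfl
    rw [hsum]
    linarith
  · haveI := hU.invertible
    have key : ((1 - Q₁).submatrix e e)⁻¹ = ((1 - Q₁)⁻¹).submatrix e e := by
      rw [← Matrix.invOf_eq_nonsing_inv, ← Matrix.invOf_eq_nonsing_inv,
        Matrix.invOf_submatrix_equiv_eq]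
    ext i j
    have h1 : ((1 - Q₁)⁻¹).submatrix Subtype.val Subtype.val i j
        = ((1 - Q₁)⁻¹).submatrix e e (Sum.inl i) (Sum.inl j) := by
      simp [Matrix.submatrix_apply, he]
    rw [h1, ← key, hN, ← Matrix.invOf_eq_nonsing_inv, Matrix.invOf_fromBlocks₂₂_eq,
      Matrix.fromBlocks_apply₁₁, Matrix.invOf_eq_nonsing_inv, ← hEdef, hS]
end

section
/- Wasserstein-1 error of quantile projection of a single distribution: let ν be a probability distribution on ℝ supported on [a, b] with a ≤ b, let m ∈ ℕ, τ_i = (2i−1)/(2m), and let λ ∈ [0,1]^m. Define ν̂ = (1/m)·Σ_{i=1}^m δ_{q_i} where q_i = (1−λ_i)·F⁻¹_ν(τ_i) + λ_i·F̄⁻¹_ν(τ_i). Then w_1(ν̂, ν) ≤ (b − a)/(2m). -/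
open MeasureTheory ProbabilityTheory Set
open scoped ENNReal

/-- Generalized inverse CDF (least τ-quantile). -/
noncomputable def invCDF (ν : Measure ℝ) (τ : ℝ) : ℝ := sInf {y | τ ≤ cdf ν y}

/-- Upper inverse CDF (greatest τ-quantile). -/
noncomputable def upInvCDF (ν : Measure ℝ) (τ : ℝ) : ℝ := sInf {y | τ < cdf ν y}

/-- Quantile level τ_i = (2i-1)/(2m), with `i : Fin m` zero-indexed. -/
noncomputable def qlevel (m : ℕ) (i : Fin m) : ℝ := (2 * (i : ℝ) + 1) / (2 * m)

/-- The uniform m-atom distribution with the given particle locations. -/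
noncomputable def paramDistOne {m : ℕ} (θ : Fin m → ℝ) : Measure ℝ :=
  (m : ℝ≥0∞)⁻¹ • ∑ i : Fin m, Measure.dirac (θ i)

/-- Return-distribution function associated with quantile parameters θ. -/
noncomputable def paramDist {X : Type*} {m : ℕ} (θ : X → Fin m → ℝ) : X → Measure ℝ :=
  fun x => paramDistOne (θ x)

/-- The distributional Bellman operator T^π. -/
noncomputable def bellman {X : Type*} [MeasurableSpace X]
    (P : X → Measure (ℝ × X)) (γ : ℝ) (η : X → Measure ℝ) : X → Measure ℝ :=
  fun x => (P x).bind (fun p => (η p.2).map (fun z => p.1 + γ * z))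

/-- The quantile projection Π^λ, parameter-level output. -/
noncomputable def projParam {X : Type*} {m : ℕ} (lam : X → Fin m → ℝ)
    (η : X → Measure ℝ) : X → Fin m → ℝ :=
  fun x i => (1 - lam x i) * invCDF (η x) (qlevel m i) + lam x i * upInvCDF (η x) (qlevel m i)

/-- The quantile projection Π^λ on return-distribution functions. -/
noncomputable def proj {X : Type*} {m : ℕ} (lam : X → Fin m → ℝ)
    (η : X → Measure ℝ) : X → Measure ℝ :=
  paramDist (projParam lam η)

/-- The projected distributional Bellman operator Π^λ T^π acting on parameters. -/
noncomputable def projBellmanParam {X : Type*} [MeasurableSpace X]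
    (P : X → Measure (ℝ × X)) (γ : ℝ) {m : ℕ} (lam : X → Fin m → ℝ)
    (θ : X → Fin m → ℝ) : X → Fin m → ℝ :=
  projParam lam (bellman P γ (paramDist θ))

/-- The cube [0,1]^{X×[m]} of interpolation parameters. -/
def unitCube (X : Type*) (m : ℕ) : Set (X → Fin m → ℝ) :=
  {lam | ∀ x i, lam x i ∈ Set.Icc (0:ℝ) 1}

/-- Wasserstein-∞ distance (valued in [0,∞]). -/
noncomputable def winf (ν ν' : Measure ℝ) : ℝ≥0∞ :=
  ⨆ t : Set.Ioo (0:ℝ) 1, ENNReal.ofReal |invCDF ν t - invCDF ν' t|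

/-- Extension of w∞ to return-distribution functions: max over states. -/
noncomputable def wbar {X : Type*} (η η' : X → Measure ℝ) : ℝ≥0∞ :=
  ⨆ x : X, winf (η x) (η' x)

/-- Wasserstein-1 distance between probability distributions on ℝ. -/
noncomputable def w1 (ν ν' : Measure ℝ) : ℝ :=
  ∫ t in Set.Ioo (0:ℝ) 1, |invCDF ν t - invCDF ν' t|

/-- Uniform m-atom distributions. -/
noncomputable def FQ (m : ℕ) : Set (Measure ℝ) :=
  {ν | ∃ z : Fin m → ℝ, ν = paramDistOne z}

namespace QPAux

variable {ν : Measure ℝ} [IsProbabilityMeasure ν] {a b : ℝ}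

lemma cdf_zero_of_lt (hsupp : ν (Set.Icc a b)ᶜ = 0) {y : ℝ} (hy : y < a) :
    cdf ν y = 0 := by
  rw [cdf_eq_real, measureReal_def]
  have h : ν (Iic y) = 0 := by
    refine measure_mono_null (fun z hz => ?_) hsupp
    simp only [mem_compl_iff, mem_Icc, not_and, not_le]
    intro h1
    have := mem_Iic.mp hz
    linarith
  simp [h]

lemma cdf_one_of_ge (hsupp : ν (Set.Icc a b)ᶜ = 0) {y : ℝ} (hy : b ≤ y) :
    cdf ν y = 1 := by
  rw [cdf_eq_real, measureReal_def]
  have h : ν (Iic y)ᶜ = 0 := by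
    refine measure_mono_null (fun z hz => ?_) hsupp
    simp only [mem_compl_iff, mem_Iic, not_le] at hz
    simp only [mem_compl_iff, mem_Icc, not_and, not_le]
    intro _
    linarith
  have h2 := measure_add_measure_compl (μ := ν) (measurableSet_Iic (a := y))
  rw [h, add_zero, measure_univ] at h2
  simp [h2]

lemma lb_mem_S (hsupp : ν (Set.Icc a b)ᶜ = 0) {τ y : ℝ} (hτ : 0 < τ)
    (hy : τ ≤ cdf ν y) : a ≤ y := by
  by_contra h
  rw [cdf_zero_of_lt hsupp (not_le.mp h)] at hy
  linarith

lemma lb_mem_U (hsupp : ν (Set.Icc a b)ᶜ = 0) {τ y : ℝ} (hτ : 0 ≤ τ)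
    (hy : τ < cdf ν y) : a ≤ y := by
  by_contra h
  rw [cdf_zero_of_lt hsupp (not_le.mp h)] at hy
  linarith

lemma invCDF_mem (hsupp : ν (Set.Icc a b)ᶜ = 0) {τ : ℝ} (h0 : 0 < τ) (h1 : τ ≤ 1) :
    invCDF ν τ ∈ Set.Icc a b := by
  have hb : τ ≤ cdf ν b := by rw [cdf_one_of_ge hsupp le_rfl]; exact h1
  exact ⟨le_csInf ⟨b, hb⟩ (fun y hy => lb_mem_S hsupp h0 hy),
    csInf_le ⟨a, fun y hy => lb_mem_S hsupp h0 hy⟩ hb⟩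

lemma upInvCDF_mem (hsupp : ν (Set.Icc a b)ᶜ = 0) {τ : ℝ} (h0 : 0 ≤ τ) (h1 : τ < 1) :
    upInvCDF ν τ ∈ Set.Icc a b := by
  have hb : τ < cdf ν b := by rw [cdf_one_of_ge hsupp le_rfl]; exact h1
  exact ⟨le_csInf ⟨b, hb⟩ (fun y hy => lb_mem_U hsupp h0 hy),
    csInf_le ⟨a, fun y hy => lb_mem_U hsupp h0 hy⟩ hb⟩

lemma invCDF_mono (hsupp : ν (Set.Icc a b)ᶜ = 0) {τ τ' : ℝ} (h0 : 0 < τ)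
    (h : τ ≤ τ') (h1 : τ' ≤ 1) : invCDF ν τ ≤ invCDF ν τ' := by
  refine csInf_le_csInf ⟨a, fun y hy => lb_mem_S hsupp h0 hy⟩
    ⟨b, by rw [Set.mem_setOf_eq, cdf_one_of_ge hsupp le_rfl]; exact h1⟩
    (Set.setOf_subset_setOf.mpr fun y hy => le_trans h hy)

lemma invCDF_le_up (hsupp : ν (Set.Icc a b)ᶜ = 0) {τ : ℝ} (h0 : 0 < τ) (h1 : τ < 1) :
    invCDF ν τ ≤ upInvCDF ν τ := by
  refine csInf_le_csInf ⟨a, fun y hy => lb_mem_S hsupp h0 hy⟩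
    ⟨b, by rw [Set.mem_setOf_eq, cdf_one_of_ge hsupp le_rfl]; exact h1⟩
    (Set.setOf_subset_setOf.mpr fun y hy => le_of_lt hy)

lemma up_le_invCDF (hsupp : ν (Set.Icc a b)ᶜ = 0) {τ τ' : ℝ} (h0 : 0 ≤ τ)
    (h : τ < τ') (h1 : τ' ≤ 1) : upInvCDF ν τ ≤ invCDF ν τ' := by
  refine csInf_le_csInf ⟨a, fun y hy => lb_mem_U hsupp h0 hy⟩
    ⟨b, by rw [Set.mem_setOf_eq, cdf_one_of_ge hsupp le_rfl]; exact h1⟩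
    (Set.setOf_subset_setOf.mpr fun y hy => lt_of_lt_of_le h hy)

lemma integrableOn_invCDF (hsupp : ν (Set.Icc a b)ᶜ = 0) {l r : ℝ}
    (h0 : 0 ≤ l) (h1 : r ≤ 1) : IntegrableOn (invCDF ν) (Set.Ioc l r) volume := by
  have hmono : MonotoneOn (invCDF ν) (Set.Ioc l r) := fun x hx y hy hxy =>
    invCDF_mono hsupp (lt_of_le_of_lt h0 hx.1) hxy (hy.2.trans h1)
  have hmeas := aemeasurable_restrict_of_monotoneOn (μ := volume) measurableSet_Ioc hmono
  refine Integrable.mono' (g := fun _ => max |a| |b|) ?_ hmeas.aestronglyMeasurable ?_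
  · exact integrableOn_const (by rw [Real.volume_Ioc]; exact ENNReal.ofReal_ne_top)
  · refine (ae_restrict_iff' measurableSet_Ioc).mpr (ae_of_all _ fun t ht => ?_)
    have h := invCDF_mem hsupp (lt_of_le_of_lt h0 ht.1) (ht.2.trans h1)
    exact abs_le_max_abs_abs h.1 h.2

lemma isProb_paramDistOne {m : ℕ} (hm : 0 < m) (q : Fin m → ℝ) :
    IsProbabilityMeasure (paramDistOne q) := by
  constructor
  simp only [paramDistOne, Measure.smul_apply, Measure.coe_finset_sum, Finset.sum_apply,
    measure_univ, Finset.sum_const, Finset.card_univ, Fintype.card_fin, nsmul_eq_mul,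
    mul_one, smul_eq_mul]
  rw [ENNReal.inv_mul_cancel (by exact_mod_cast hm.ne') (by simp)]

lemma cdf_paramDistOne {m : ℕ} (hm : 0 < m) (q : Fin m → ℝ) (y : ℝ) :
    cdf (paramDistOne q) y
      = ((Finset.univ.filter (fun i => q i ≤ y)).card : ℝ) / m := by
  haveI := isProb_paramDistOne hm q
  rw [cdf_eq_real, measureReal_def]
  have h1 : paramDistOne q (Iic y)
      = (m : ℝ≥0∞)⁻¹ * ((Finset.univ.filter (fun i => q i ≤ y)).card : ℝ≥0∞) := by
    simp only [paramDistOne, Measure.smul_apply, Measure.coe_finset_sum, Finset.sum_apply,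
      Measure.dirac_apply' _ measurableSet_Iic, smul_eq_mul]
    congr 1
    rw [← Finset.sum_boole]
    refine Finset.sum_congr rfl fun i _ => ?_
    by_cases h : q i ≤ y <;> simp [Set.indicator_apply, mem_Iic, h]
  rw [h1, ENNReal.toReal_mul]
  simp [ENNReal.toReal_inv, div_eq_inv_mul]

lemma invCDF_paramDistOne {m : ℕ} (hm : 0 < m) {q : Fin m → ℝ} (hq : Monotone q)
    (i : Fin m) {t : ℝ}
    (ht : t ∈ Set.Ioc (((i : ℕ) : ℝ) / m) ((((i : ℕ) : ℝ) + 1) / m)) :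
    invCDF (paramDistOne q) t = q i := by
  classical
  have hm' : (0:ℝ) < m := Nat.cast_pos.mpr hm
  have hset : {y | t ≤ cdf (paramDistOne q) y} = Set.Ici (q i) := by
    ext y
    simp only [Set.mem_setOf_eq, Set.mem_Ici, cdf_paramDistOne hm]
    constructor
    · intro h
      by_contra hy
      push_neg at hy
      have hsub : Finset.univ.filter (fun j => q j ≤ y) ⊆ Finset.Iio i := by
        intro j hj
        simp only [Finset.mem_filter, Finset.mem_univ, true_and] at hj
        simp only [Finset.mem_Iio]
        by_contra hji
        push_neg at hji
        exact absurd (le_trans (hq hji) hj) (not_le.mpr hy)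
      have hcard : ((Finset.univ.filter (fun j => q j ≤ y)).card : ℝ) ≤ (i : ℕ) := by
        have := Finset.card_le_card hsub
        rw [Fin.card_Iio] at this
        exact_mod_cast this
      have hlt : ((i : ℕ) : ℝ) / m < ((Finset.univ.filter (fun j => q j ≤ y)).card : ℝ) / m :=
        lt_of_lt_of_le ht.1 h
      rw [div_lt_div_iff_of_pos_right hm'] at hlt
      linarith
    · intro h
      have hsub : Finset.Iic i ⊆ Finset.univ.filter (fun j => q j ≤ y) := by
        intro j hj
        simp only [Finset.mem_Iic] at hj
        simp only [Finset.mem_filter, Finset.mem_univ, true_and]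
        exact le_trans (hq hj) h
      have hcard : ((i : ℕ) : ℝ) + 1 ≤ ((Finset.univ.filter (fun j => q j ≤ y)).card : ℝ) := by
        have := Finset.card_le_card hsub
        rw [Fin.card_Iic] at this
        exact_mod_cast this
      refine le_trans ht.2 ?_
      rw [div_le_div_iff_of_pos_right hm']
      exact hcard
  rw [invCDF, hset, csInf_Ici]

end QPAux

open QPAux in
/-- Wasserstein-1 error of the quantile projection of a single distribution
supported on `[a, b]`: the uniform m-atom distribution on any interpolated τ_i-quantiles is
within `(b-a)/(2m)` of `ν` in `w_1`. -/
theorem quantile_projection_w1_error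
    (ν : Measure ℝ) [IsProbabilityMeasure ν]
    (a b : ℝ) (hab : a ≤ b) (hsupp : ν (Set.Icc a b)ᶜ = 0)
    {m : ℕ} (hm : 0 < m)
    (lam : Fin m → ℝ) (hlam : ∀ i, lam i ∈ Set.Icc (0:ℝ) 1) :
    w1 (paramDistOne (fun i =>
        (1 - lam i) * invCDF ν (qlevel m i) + lam i * upInvCDF ν (qlevel m i))) ν
      ≤ (b - a) / (2 * m) := by
  classical
  set q : Fin m → ℝ := fun i =>
    (1 - lam i) * invCDF ν (qlevel m i) + lam i * upInvCDF ν (qlevel m i) with hq_def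
  have hm' : (0:ℝ) < m := Nat.cast_pos.mpr hm
  -- facts about qlevel
  have hiv : ∀ i : Fin m, ((i : ℕ) : ℝ) + 1 ≤ m := by
    intro i; exact_mod_cast i.isLt
  have hql1 : ∀ i : Fin m, ((i : ℕ) : ℝ) / m < qlevel m i := by
    intro i
    rw [qlevel, div_lt_div_iff₀ hm' (by positivity)]
    push_cast
    nlinarith [hiv i]
  have hql2 : ∀ i : Fin m, qlevel m i < (((i : ℕ) : ℝ) + 1) / m := by
    intro i
    rw [qlevel, div_lt_div_iff₀ (by positivity) hm']
    push_cast
    nlinarith [hiv i]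
  have hql0 : ∀ i : Fin m, 0 < qlevel m i := by
    intro i
    have : (0:ℝ) ≤ ((i : ℕ) : ℝ) / m := by positivity
    exact lt_of_le_of_lt this (hql1 i)
  have hqlt1 : ∀ i : Fin m, qlevel m i < 1 := by
    intro i
    refine lt_of_lt_of_le (hql2 i) ?_
    rw [div_le_one hm']; exact hiv i
  -- q bounds
  have hq_lb : ∀ i, invCDF ν (qlevel m i) ≤ q i := by
    intro i
    have h := invCDF_le_up hsupp (hql0 i) (hqlt1 i)
    have hl := hlam i
    simp only [Set.mem_Icc] at hl
    simp only [hq_def]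
    nlinarith [hl.1, hl.2]
  have hq_ub : ∀ i, q i ≤ upInvCDF ν (qlevel m i) := by
    intro i
    have h := invCDF_le_up hsupp (hql0 i) (hqlt1 i)
    have hl := hlam i
    simp only [Set.mem_Icc] at hl
    simp only [hq_def]
    nlinarith [hl.1, hl.2]
  -- monotone q
  have hq_mono : Monotone q := by
    intro i j hij
    rcases eq_or_lt_of_le hij with rfl | hlt
    · exact le_rfl
    · have hττ : qlevel m i < qlevel m j := by
        rw [qlevel, qlevel, div_lt_div_iff_of_pos_right (by positivity)]
        have : ((i : ℕ) : ℝ) < ((j : ℕ) : ℝ) := by exact_mod_cast hlt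
        linarith
      exact le_trans (hq_ub i) (le_trans
        (up_le_invCDF hsupp (le_of_lt (hql0 i)) hττ (le_of_lt (hqlt1 j))) (hq_lb j))
  -- partition of (0,1]
  have hIoc : Set.Ioc (0:ℝ) 1
      = ⋃ i ∈ (Finset.univ : Finset (Fin m)),
          Set.Ioc (((i : ℕ) : ℝ) / m) ((((i : ℕ) : ℝ) + 1) / m) := by
    ext t
    simp only [Set.mem_Ioc, Set.mem_iUnion, Finset.mem_univ, exists_prop, true_and]
    constructor
    · rintro ⟨ht0, ht1⟩
      have hceil1 : 1 ≤ ⌈t * m⌉₊ := Nat.one_le_ceil_iff.mpr (by positivity)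
      have hceilm : ⌈t * m⌉₊ ≤ m := Nat.ceil_le.mpr (by nlinarith)
      refine ⟨⟨⌈t * m⌉₊ - 1, by omega⟩, ?_, ?_⟩
      · rw [div_lt_iff₀ hm']
        simp only [Fin.val_mk]
        exact_mod_cast Nat.lt_ceil.mp (by omega)
      · rw [le_div_iff₀ hm']
        simp only [Fin.val_mk]
        have h1 : ((⌈t * m⌉₊ - 1 : ℕ) : ℝ) + 1 = (⌈t * m⌉₊ : ℝ) := by
          have : (⌈t * m⌉₊ - 1 : ℕ) + 1 = ⌈t * m⌉₊ := by omega
          exact_mod_cast congrArg (Nat.cast (R := ℝ)) this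
        rw [h1]
        exact Nat.le_ceil _
    · rintro ⟨i, h1, h2⟩
      refine ⟨lt_of_le_of_lt (by positivity) h1, le_trans h2 ?_⟩
      rw [div_le_one hm']; exact hiv i
  -- integrability pieces
  have hg_int : ∀ (c : ℝ) {l r : ℝ}, 0 ≤ l → r ≤ 1 →
      IntegrableOn (fun t => |c - invCDF ν t|) (Set.Ioc l r) volume := by
    intro c l r h0 h1
    have hc : IntegrableOn (fun _ => c) (Set.Ioc l r) volume :=
      integrableOn_const (by rw [Real.volume_Ioc]; exact ENNReal.ofReal_ne_top)
    exact (hc.sub (integrableOn_invCDF hsupp h0 h1)).abs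
  have hl0 : ∀ i : Fin m, (0:ℝ) ≤ ((i : ℕ) : ℝ) / m := by intro i; positivity
  have hr1 : ∀ i : Fin m, (((i : ℕ) : ℝ) + 1) / m ≤ 1 := by
    intro i; rw [div_le_one hm']; exact hiv i
  have hEq : ∀ i : Fin m, Set.EqOn (fun t => |invCDF (paramDistOne q) t - invCDF ν t|)
      (fun t => |q i - invCDF ν t|)
      (Set.Ioc (((i : ℕ) : ℝ) / m) ((((i : ℕ) : ℝ) + 1) / m)) := by
    intro i t ht
    simp only
    rw [invCDF_paramDistOne hm hq_mono i ht]
  have hf_int : ∀ i : Fin m, IntegrableOn (fun t => |invCDF (paramDistOne q) t - invCDF ν t|)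
      (Set.Ioc (((i : ℕ) : ℝ) / m) ((((i : ℕ) : ℝ) + 1) / m)) volume := by
    intro i
    exact (hg_int (q i) (hl0 i) (hr1 i)).congr_fun (fun t ht => ((hEq i) ht).symm)
      measurableSet_Ioc
  -- disjointness
  have hdisj : Set.Pairwise (↑(Finset.univ : Finset (Fin m)))
      (Function.onFun Disjoint fun i : Fin m =>
        Set.Ioc (((i : ℕ) : ℝ) / m) ((((i : ℕ) : ℝ) + 1) / m)) := by
    intro i _ j _ hij
    have key : ∀ i j : Fin m, i < j → Disjoint
        (Set.Ioc (((i : ℕ) : ℝ) / m) ((((i : ℕ) : ℝ) + 1) / m))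
        (Set.Ioc (((j : ℕ) : ℝ) / m) ((((j : ℕ) : ℝ) + 1) / m)) := by
      intro i j hlt
      rw [Set.Ioc_disjoint_Ioc]
      have hij1 : ((i : ℕ) : ℝ) + 1 ≤ ((j : ℕ) : ℝ) := by exact_mod_cast hlt
      refine le_trans (min_le_left _ _) (le_trans ?_ (le_max_right _ _))
      rw [div_le_div_iff_of_pos_right hm']
      exact hij1
    rcases hij.lt_or_gt with h | h
    · exact key i j h
    · exact (key j i h).symm
  -- per-interval bound
  have hbound : ∀ i : Fin m,
      ∫ t in Set.Ioc (((i : ℕ) : ℝ) / m) ((((i : ℕ) : ℝ) + 1) / m), |q i - invCDF ν t|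
        ≤ 1 / (2 * m) * (invCDF ν ((((i : ℕ) : ℝ) + 1) / m) - upInvCDF ν (((i : ℕ) : ℝ) / m)) := by
    intro i
    set l : ℝ := ((i : ℕ) : ℝ) / m with hl_def
    set r : ℝ := (((i : ℕ) : ℝ) + 1) / m with hr_def
    set τ : ℝ := qlevel m i with hτ_def
    have hsplit : Set.Ioc l r = Set.Ioc l τ ∪ Set.Ioc τ r :=
      (Set.Ioc_union_Ioc_eq_Ioc (hql1 i).le (hql2 i).le).symm
    have hg1 : IntegrableOn (fun t => |q i - invCDF ν t|) (Set.Ioc l τ) volume :=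
      hg_int (q i) (hl0 i) (hqlt1 i).le
    have hg2 : IntegrableOn (fun t => |q i - invCDF ν t|) (Set.Ioc τ r) volume :=
      hg_int (q i) (hql0 i).le (hr1 i)
    rw [hsplit, setIntegral_union (Set.Ioc_disjoint_Ioc_of_le le_rfl) measurableSet_Ioc hg1 hg2]
    have hb1 : ∫ t in Set.Ioc l τ, |q i - invCDF ν t|
        ≤ (τ - l) * (q i - upInvCDF ν l) := by
      have hpt : ∀ t ∈ Set.Ioc l τ, |q i - invCDF ν t| ≤ q i - upInvCDF ν l := by
        intro t ht
        have ht0 : 0 < t := lt_of_le_of_lt (hl0 i) ht.1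
        have ht1 : t ≤ 1 := le_trans ht.2 (hqlt1 i).le
        have h1 : invCDF ν t ≤ q i :=
          le_trans (invCDF_mono hsupp ht0 ht.2 (hqlt1 i).le) (hq_lb i)
        have h2 : upInvCDF ν l ≤ invCDF ν t := up_le_invCDF hsupp (hl0 i) ht.1 ht1
        rw [abs_of_nonneg (by linarith)]
        linarith
      have hconst : IntegrableOn (fun _ => q i - upInvCDF ν l) (Set.Ioc l τ) volume :=
        integrableOn_const (by rw [Real.volume_Ioc]; exact ENNReal.ofReal_ne_top)
      have := setIntegral_mono_on hg1 hconst measurableSet_Ioc hpt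
      rwa [setIntegral_const, measureReal_def, Real.volume_Ioc,
        ENNReal.toReal_ofReal (by linarith [hql1 i]), smul_eq_mul] at this
    have hb2 : ∫ t in Set.Ioc τ r, |q i - invCDF ν t|
        ≤ (r - τ) * (invCDF ν r - q i) := by
      have hpt : ∀ t ∈ Set.Ioc τ r, |q i - invCDF ν t| ≤ invCDF ν r - q i := by
        intro t ht
        have ht0 : 0 < t := lt_of_lt_of_le (hql0 i) ht.1.le
        have h1 : q i ≤ invCDF ν t :=
          le_trans (hq_ub i) (up_le_invCDF hsupp (hql0 i).le ht.1 (le_trans ht.2 (hr1 i)))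
        have h2 : invCDF ν t ≤ invCDF ν r := invCDF_mono hsupp ht0 ht.2 (hr1 i)
        rw [abs_of_nonpos (by linarith)]
        linarith
      have hconst : IntegrableOn (fun _ => invCDF ν r - q i) (Set.Ioc τ r) volume :=
        integrableOn_const (by rw [Real.volume_Ioc]; exact ENNReal.ofReal_ne_top)
      have := setIntegral_mono_on hg2 hconst measurableSet_Ioc hpt
      rwa [setIntegral_const, measureReal_def, Real.volume_Ioc,
        ENNReal.toReal_ofReal (by linarith [hql2 i]), smul_eq_mul] at this
    have hτl : τ - l = 1 / (2 * m) := by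
      rw [hτ_def, hl_def, qlevel]
      field_simp
      ring
    have hrτ : r - τ = 1 / (2 * m) := by
      rw [hτ_def, hr_def, qlevel]
      field_simp
      ring
    rw [hτl] at hb1
    rw [hrτ] at hb2
    calc (∫ t in Set.Ioc l τ, |q i - invCDF ν t|) + ∫ t in Set.Ioc τ r, |q i - invCDF ν t|
        ≤ 1 / (2 * m) * (q i - upInvCDF ν l) + 1 / (2 * m) * (invCDF ν r - q i) :=
          add_le_add hb1 hb2
      _ = 1 / (2 * m) * (invCDF ν r - upInvCDF ν l) := by ring
  -- assemble
  have key : w1 (paramDistOne q) ν ≤ ∑ i : Fin m,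
      1 / (2 * (m:ℝ)) * (invCDF ν ((((i : ℕ) : ℝ) + 1) / m) - upInvCDF ν (((i : ℕ) : ℝ) / m)) := by
    rw [w1, ← integral_Ioc_eq_integral_Ioo, hIoc,
      integral_biUnion_finset Finset.univ (fun i _ => measurableSet_Ioc) hdisj
        (fun i _ => hf_int i)]
    refine Finset.sum_le_sum fun i _ => ?_
    rw [setIntegral_congr_fun measurableSet_Ioc (hEq i)]
    exact hbound i
  refine le_trans key ?_
  rw [← Finset.mul_sum]
  have hsum : ∑ i : Fin m,
      (invCDF ν ((((i : ℕ) : ℝ) + 1) / m) - upInvCDF ν (((i : ℕ) : ℝ) / m)) ≤ b - a := by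
    set c : ℕ → ℝ := fun k => if k = 0 then a else if k < m then upInvCDF ν ((k:ℝ)/m) else b
      with hc_def
    have hcm : c m = b := by
      simp only [hc_def, if_neg hm.ne', if_neg (lt_irrefl m)]
    have hc0 : c 0 = a := by simp only [hc_def, if_pos rfl]
    rw [Fin.sum_univ_eq_sum_range
      (fun k => invCDF ν ((((k:ℕ):ℝ) + 1) / (m:ℝ)) - upInvCDF ν (((k:ℕ):ℝ) / (m:ℝ))) m]
    have hterm : ∀ k ∈ Finset.range m,
        invCDF ν (((k:ℝ) + 1) / m) - upInvCDF ν ((k:ℝ) / m) ≤ c (k+1) - c k := by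
      intro k hk
      rw [Finset.mem_range] at hk
      have hup : c k ≤ upInvCDF ν ((k:ℝ)/m) := by
        have hmem := upInvCDF_mem hsupp (show (0:ℝ) ≤ (k:ℝ)/m by positivity)
          (by rw [div_lt_one hm']; exact_mod_cast hk)
        by_cases h0 : k = 0
        · subst h0
          simp only [hc_def, if_pos rfl]
          exact hmem.1
        · simp only [hc_def, if_neg h0, if_pos hk]
          exact le_rfl
      have hpos : 0 < ((k:ℝ) + 1) / m := by positivity
      have hinv : invCDF ν (((k:ℝ) + 1) / m) ≤ c (k+1) := by
        by_cases h1 : k + 1 < m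
        · simp only [hc_def, if_neg (Nat.succ_ne_zero k), if_pos h1]
          have := invCDF_le_up hsupp hpos
            (by rw [div_lt_one hm']; exact_mod_cast h1)
          push_cast
          convert this using 3
        · simp only [hc_def, if_neg (Nat.succ_ne_zero k), if_neg h1]
          refine (invCDF_mem hsupp hpos ?_).2
          rw [div_le_one hm']
          exact_mod_cast (by omega : k + 1 ≤ m)
      linarith
    calc ∑ k ∈ Finset.range m,
          (invCDF ν (((k:ℝ) + 1) / m) - upInvCDF ν ((k:ℝ) / m))
        ≤ ∑ k ∈ Finset.range m, (c (k+1) - c k) := Finset.sum_le_sum hterm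
      _ = c m - c 0 := Finset.sum_range_sub c m
      _ = b - a := by rw [hcm, hc0]
  calc 1 / (2 * (m:ℝ)) * ∑ i : Fin m,
        (invCDF ν ((((i : ℕ) : ℝ) + 1) / m) - upInvCDF ν (((i : ℕ) : ℝ) / m))
      ≤ 1 / (2 * (m:ℝ)) * (b - a) := by
        apply mul_le_mul_of_nonneg_left hsum (by positivity)
    _ = (b - a) / (2 * m) := by ring
end

section
/- Optimality of the QTD quantile levels: for any m ∈ ℕ and any real numbers 0 < τ_1 ≤ τ_2 ≤ … ≤ τ_m < 1, one has max( τ_1, max_{i=1,…,m−1} (τ_{i+1} − τ_i)/2, 1 − τ_m ) ≥ 1/(2m), with equality when τ_i = (2i−1)/(2m) for all i. Hence the choice τ_i = (2i−1)/(2m) minimizes this quantity over all admissible quantile levels, with minimum value 1/(2m). -/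
/-- Optimality of the QTD quantile levels: for any monotone quantile levels
`0 < τ_1 ≤ … ≤ τ_m < 1`, the quantity `max(τ_1, max_i (τ_{i+1} − τ_i)/2, 1 − τ_m)` is at least
`1/(2m)` (expressed as: one of the three kinds of terms is ≥ 1/(2m)); and for the QTD choice
`τ_i = (2i−1)/(2m)` all of these terms are equal to `1/(2m)`, so the choice attains the minimum
value `1/(2m)`. -/
theorem qtd_levels_optimal
    {m : ℕ} (hm : 0 < m) (τ : Fin m → ℝ) (hmono : Monotone τ)
    (h0 : 0 < τ ⟨0, hm⟩) (h1 : τ ⟨m - 1, Nat.sub_lt hm Nat.one_pos⟩ < 1) :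
    (1 / (2 * (m:ℝ)) ≤ τ ⟨0, hm⟩
      ∨ (∃ i : ℕ, ∃ h : i + 1 < m,
          1 / (2 * (m:ℝ)) ≤ (τ ⟨i + 1, h⟩ - τ ⟨i, Nat.lt_of_succ_lt h⟩) / 2)
      ∨ 1 / (2 * (m:ℝ)) ≤ 1 - τ ⟨m - 1, Nat.sub_lt hm Nat.one_pos⟩)
    ∧ ((∀ i : Fin m, τ i = (2 * (i:ℝ) + 1) / (2 * m)) →
        (τ ⟨0, hm⟩ = 1 / (2 * (m:ℝ))
        ∧ (∀ (i : ℕ) (h : i + 1 < m),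
            (τ ⟨i + 1, h⟩ - τ ⟨i, Nat.lt_of_succ_lt h⟩) / 2 = 1 / (2 * (m:ℝ)))
        ∧ 1 - τ ⟨m - 1, Nat.sub_lt hm Nat.one_pos⟩ = 1 / (2 * (m:ℝ)))) := by
  have hmR : (0:ℝ) < m := by exact_mod_cast hm
  constructor
  · by_contra hcon
    push_neg at hcon
    obtain ⟨ha, hb, hc⟩ := hcon
    -- τ_i < 1/(2m) + i/m by induction
    have key : ∀ i : ℕ, ∀ hi : i < m, τ ⟨i, hi⟩ < 1 / (2 * m) + i / m := by
      intro i
      induction i with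
      | zero => intro hi; simpa using ha
      | succ n ih =>
        intro hi
        have hn : n < m := Nat.lt_of_succ_lt hi
        have h2 := hb n hi
        have := ih hn
        have hdiv : ((n:ℝ)+1)/m = (n:ℝ)/m + 1/m := by field_simp
        have h1m : (1:ℝ)/(2*m) + 1/(2*m) = 1/m := by field_simp; norm_num
        push_cast
        rw [hdiv]
        linarith [this, h2]
    have hlast := key (m - 1) (Nat.sub_lt hm Nat.one_pos)
    have hcast : ((m - 1 : ℕ) : ℝ) = (m : ℝ) - 1 := by
      have := Nat.one_le_iff_ne_zero.mpr (Nat.pos_iff_ne_zero.mp hm)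
      push_cast [Nat.cast_sub this]; ring
    rw [hcast] at hlast
    have : 1 - τ ⟨m - 1, Nat.sub_lt hm Nat.one_pos⟩ < 1 / (2 * m) := hc
    have hfield : 1 / (2 * (m:ℝ)) + ((m:ℝ) - 1) / m = 1 - 1 / (2 * m) := by
      field_simp; ring
    linarith [hlast, hfield ▸ hlast]
  · intro hτ
    refine ⟨?_, ?_, ?_⟩
    · rw [hτ]; push_cast; ring
    · intro i h
      rw [hτ, hτ]; push_cast
      field_simp
      ring
    · rw [hτ]
      have hcast : ((⟨m - 1, Nat.sub_lt hm Nat.one_pos⟩ : Fin m) : ℝ) = (m : ℝ) - 1 := by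
        have h1 : 1 ≤ m := hm
        simp only [Fin.val_mk]
        push_cast [Nat.cast_sub h1]; ring
      rw [hcast]
      field_simp
      ring
end

section
/- Minimizers of the quantile regression loss are exactly the τ-quantiles: let ν be a probability distribution on ℝ with finite mean, τ ∈ (0,1), and define the quantile regression loss L(v) = E_{Z∼ν}[ (τ·1{Z > v} + (1−τ)·1{Z < v}) · |Z − v| ] for v ∈ ℝ. Then v minimizes L over ℝ if and only if P_{Z∼ν}(Z < v) ≤ τ ≤ P_{Z∼ν}(Z ≤ v); equivalently, the set of minimizers of L is the interval [F⁻¹_ν(τ), F̄⁻¹_ν(τ)]. -/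
open MeasureTheory ProbabilityTheory Set
open scoped ENNReal

noncomputable def qrf (τ v z : ℝ) : ℝ := τ * max (z - v) 0 + (1 - τ) * max (v - z) 0

lemma qrf_eq (τ v z : ℝ) :
    (τ * (if v < z then (1:ℝ) else 0) + (1 - τ) * (if z < v then (1:ℝ) else 0)) * |z - v|
      = qrf τ v z := by
  unfold qrf
  rcases lt_trichotomy z v with h | h | h
  · rw [if_neg (by linarith), if_pos h, abs_of_neg (by linarith),
      max_eq_right (by linarith), max_eq_left (by linarith)]
    ring
  · subst h; simp
  · rw [if_pos h, if_neg (by linarith), abs_of_pos (by linarith),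
      max_eq_left (by linarith), max_eq_right (by linarith)]
    ring

lemma qrf_integrable {ν : Measure ℝ} [IsProbabilityMeasure ν] (hmean : Integrable id ν) {τ : ℝ}
    (hτ0 : 0 ≤ τ) (hτ1 : τ ≤ 1) (v : ℝ) : Integrable (fun z => qrf τ v z) ν := by
  have hmeas : AEStronglyMeasurable (fun z => qrf τ v z) ν := by
    apply Continuous.aestronglyMeasurable
    unfold qrf; fun_prop
  have hbnd : Integrable (fun z : ℝ => |z| + |v|) ν := by
    simpa using (hmean.abs.add (integrable_const |v|))
  refine hbnd.mono' hmeas (Filter.Eventually.of_forall fun z => ?_)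
  have h1 : max (z - v) 0 ≤ |z| + |v| :=
    max_le (by linarith [le_abs_self z, neg_abs_le v]) (by positivity)
  have h2 : max (v - z) 0 ≤ |z| + |v| :=
    max_le (by linarith [le_abs_self v, neg_abs_le z]) (by positivity)
  have h3 : (0:ℝ) ≤ max (z - v) 0 := le_max_right _ _
  have h4 : (0:ℝ) ≤ max (v - z) 0 := le_max_right _ _
  rw [Real.norm_eq_abs, abs_of_nonneg (by unfold qrf; nlinarith)]
  unfold qrf; nlinarith

lemma qrf_diff (τ : ℝ) {v u : ℝ} (h : v ≤ u) (z : ℝ) :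
    qrf τ u z - qrf τ v z = min (max (u - z) 0) (u - v) - τ * (u - v) := by
  unfold qrf
  rcases le_total z v with h1 | h1
  · rw [max_eq_right (by linarith : z - u ≤ 0), max_eq_left (by linarith : (0:ℝ) ≤ u - z),
      max_eq_right (by linarith : z - v ≤ 0), max_eq_left (by linarith : (0:ℝ) ≤ v - z),
      min_eq_right (by linarith : u - v ≤ u - z)]
    ring
  · rcases le_total z u with h2 | h2
    · rw [max_eq_right (by linarith : z - u ≤ 0), max_eq_left (by linarith : (0:ℝ) ≤ u - z),
        max_eq_left (by linarith : (0:ℝ) ≤ z - v), max_eq_right (by linarith : v - z ≤ 0),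
        min_eq_left (by linarith : u - z ≤ u - v)]
      ring
    · rw [max_eq_left (by linarith : (0:ℝ) ≤ z - u), max_eq_right (by linarith : u - z ≤ 0),
        max_eq_left (by linarith : (0:ℝ) ≤ z - v), max_eq_right (by linarith : v - z ≤ 0),
        min_eq_left (by linarith : (0:ℝ) ≤ u - v)]
      ring


/-- Minimizers of the quantile regression loss are exactly the τ-quantiles:
`v` minimizes `L` iff `P(Z < v) ≤ τ ≤ P(Z ≤ v)`; equivalently the set of minimizers is the
interval `[F⁻¹_ν(τ), F̄⁻¹_ν(τ)]`. -/
theorem quantile_regression_loss_minimizers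
    (ν : Measure ℝ) [IsProbabilityMeasure ν] (hmean : Integrable id ν)
    (τ : ℝ) (hτ : τ ∈ Set.Ioo (0:ℝ) 1)
    (L : ℝ → ℝ)
    (hL : ∀ v, L v = ∫ z,
        (τ * (if v < z then (1:ℝ) else 0) + (1 - τ) * (if z < v then (1:ℝ) else 0))
          * |z - v| ∂ν) :
    (∀ v : ℝ, (∀ u : ℝ, L v ≤ L u) ↔
      ((ν (Set.Iio v)).toReal ≤ τ ∧ τ ≤ (ν (Set.Iic v)).toReal))
    ∧ {v : ℝ | ∀ u : ℝ, L v ≤ L u} = Set.Icc (invCDF ν τ) (upInvCDF ν τ) := by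
  obtain ⟨hτ0, hτ1⟩ := hτ
  have hint : ∀ v, Integrable (fun z => qrf τ v z) ν := qrf_integrable hmean hτ0.le hτ1.le
  have hLq : ∀ v, L v = ∫ z, qrf τ v z ∂ν := fun v => by
    rw [hL v]; exact integral_congr_ae (Filter.Eventually.of_forall fun z => qrf_eq τ v z)
  have hmin_int : ∀ v u, v ≤ u → Integrable (fun z => min (max (u - z) 0) (u - v)) ν := by
    intro v u h
    have he : (fun z => min (max (u - z) 0) (u - v))
        = fun z => (qrf τ u z - qrf τ v z) + τ * (u - v) := by
      funext z; rw [qrf_diff τ h z]; ring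
    rw [he]; exact ((hint u).sub (hint v)).add (integrable_const _)
  have hdiff : ∀ v u, v ≤ u →
      L u - L v = (∫ z, min (max (u - z) 0) (u - v) ∂ν) - τ * (u - v) := by
    intro v u h
    rw [hLq u, hLq v, ← integral_sub (hint u) (hint v),
      integral_congr_ae (Filter.Eventually.of_forall (qrf_diff τ h)),
      integral_sub (hmin_int v u h) (integrable_const _), integral_const]
    simp
  have hub : ∀ v u, v ≤ u →
      (∫ z, min (max (u - z) 0) (u - v) ∂ν) ≤ (u - v) * (ν (Iio u)).toReal := by
    intro v u h
    calc ∫ z, min (max (u - z) 0) (u - v) ∂ν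
        ≤ ∫ z, (Iio u).indicator (fun _ => u - v) z ∂ν := by
          refine integral_mono (hmin_int v u h)
            ((integrable_const (u - v)).indicator measurableSet_Iio) fun z => ?_
          by_cases hz : z ∈ Iio u
          · rw [Set.indicator_of_mem hz]; exact min_le_right _ _
          · rw [Set.indicator_of_notMem hz]
            simp only [mem_Iio, not_lt] at hz
            rw [max_eq_right (by linarith), min_eq_left (by linarith)]
      _ = (u - v) * (ν (Iio u)).toReal := by
          rw [integral_indicator_const _ measurableSet_Iio, smul_eq_mul, mul_comm]; rfl
  have hlb : ∀ v u, v ≤ u →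
      (u - v) * (ν (Iic v)).toReal ≤ ∫ z, min (max (u - z) 0) (u - v) ∂ν := by
    intro v u h
    calc (u - v) * (ν (Iic v)).toReal
        = ∫ z, (Iic v).indicator (fun _ => u - v) z ∂ν := by
          rw [integral_indicator_const _ measurableSet_Iic, smul_eq_mul, mul_comm]; rfl
      _ ≤ ∫ z, min (max (u - z) 0) (u - v) ∂ν := by
          refine integral_mono ((integrable_const (u - v)).indicator measurableSet_Iic)
            (hmin_int v u h) fun z => ?_
          by_cases hz : z ∈ Iic v
          · rw [Set.indicator_of_mem hz]
            simp only [mem_Iic] at hz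
            rw [max_eq_left (by linarith), min_eq_right (by linarith)]
          · rw [Set.indicator_of_notMem hz]
            exact le_min (le_max_right _ _) (by linarith)
  have hIio_lim : ∀ v : ℝ, Filter.Tendsto (fun n : ℕ => (ν (Iic (v - 1/(n+1)))).toReal)
      Filter.atTop (nhds ((ν (Iio v)).toReal)) := by
    intro v
    have hmono : Monotone fun n : ℕ => Iic (v - 1/(n+1 : ℝ)) := by
      intro a b hab
      apply Iic_subset_Iic.mpr
      have h1 : (1:ℝ)/(b+1) ≤ 1/(a+1) := by
        apply one_div_le_one_div_of_le (by positivity)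
        have := (Nat.cast_le (α := ℝ)).mpr hab
        linarith
      linarith
    have hU : (⋃ n : ℕ, Iic (v - 1/(n+1 : ℝ))) = Iio v := by
      ext x
      simp only [mem_iUnion, mem_Iic, mem_Iio]
      constructor
      · rintro ⟨n, hn⟩
        have : (0:ℝ) < 1/(n+1) := by positivity
        linarith
      · intro hx
        obtain ⟨n, hn⟩ := exists_nat_one_div_lt (by linarith : (0:ℝ) < v - x)
        exact ⟨n, by linarith⟩
    have ht := tendsto_measure_iUnion_atTop (μ := ν) hmono
    rw [hU] at ht
    exact (ENNReal.tendsto_toReal (measure_ne_top ν _)).comp ht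
  have hIic_lim : ∀ v : ℝ, Filter.Tendsto (fun n : ℕ => (ν (Iic (v + 1/(n+1)))).toReal)
      Filter.atTop (nhds ((ν (Iic v)).toReal)) := by
    intro v
    have hanti : Antitone fun n : ℕ => Iic (v + 1/(n+1 : ℝ)) := by
      intro a b hab
      apply Iic_subset_Iic.mpr
      have h1 : (1:ℝ)/(b+1) ≤ 1/(a+1) := by
        apply one_div_le_one_div_of_le (by positivity)
        have := (Nat.cast_le (α := ℝ)).mpr hab
        linarith
      linarith
    have hI : (⋂ n : ℕ, Iic (v + 1/(n+1 : ℝ))) = Iic v := by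
      ext x
      simp only [mem_iInter, mem_Iic]
      constructor
      · intro hx
        by_contra hc
        push_neg at hc
        obtain ⟨n, hn⟩ := exists_nat_one_div_lt (by linarith : (0:ℝ) < x - v)
        linarith [hx n]
      · intro hx n
        have : (0:ℝ) < 1/(n+1 : ℝ) := by positivity
        linarith
    have ht := tendsto_measure_iInter_atTop (μ := ν)
      (fun n => measurableSet_Iic.nullMeasurableSet) hanti ⟨0, measure_ne_top ν _⟩
    rw [hI] at ht
    exact (ENNReal.tendsto_toReal (measure_ne_top ν _)).comp ht
  have hchar : ∀ v : ℝ, (∀ u : ℝ, L v ≤ L u) ↔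
      ((ν (Iio v)).toReal ≤ τ ∧ τ ≤ (ν (Iic v)).toReal) := by
    intro v
    constructor
    · intro hmin
      constructor
      · by_contra hc
        push_neg at hc
        obtain ⟨n, hn⟩ := ((hIio_lim v).eventually (eventually_gt_nhds hc)).exists
        set u := v - 1/(n+1 : ℝ) with hu_def
        have hp : (0:ℝ) < 1/(n+1 : ℝ) := by positivity
        have hu : u ≤ v := by rw [hu_def]; linarith
        have hd := hdiff u v hu
        have hge := hlb u v hu
        have hpos : 0 < (v - u) * ((ν (Iic u)).toReal - τ) :=
          mul_pos (by rw [hu_def]; linarith) (by linarith)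
        nlinarith [hmin u]
      · by_contra hc
        push_neg at hc
        obtain ⟨n, hn⟩ := ((hIic_lim v).eventually (eventually_lt_nhds hc)).exists
        set u := v + 1/(n+1 : ℝ) with hu_def
        have hp : (0:ℝ) < 1/(n+1 : ℝ) := by positivity
        have hu : v ≤ u := by rw [hu_def]; linarith
        have hd := hdiff v u hu
        have hle := hub v u hu
        have hmono2 : (ν (Iio u)).toReal ≤ (ν (Iic u)).toReal :=
          ENNReal.toReal_mono (measure_ne_top ν _) (measure_mono Iio_subset_Iic_self)
        have huv : 0 < u - v := by rw [hu_def]; linarith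
        have hm3 := mul_le_mul_of_nonneg_left hmono2 huv.le
        have hneg : (u - v) * ((ν (Iic u)).toReal - τ) < 0 :=
          mul_neg_of_pos_of_neg huv (by linarith)
        nlinarith [hmin u]
    · rintro ⟨h1, h2⟩ u
      rcases le_total v u with h | h
      · have hd := hdiff v u h
        have hge := hlb v u h
        nlinarith
      · have hd := hdiff u v h
        have hle := hub u v h
        nlinarith
  refine ⟨hchar, ?_⟩
  obtain ⟨y₀, hy₀⟩ : ∃ y, cdf ν y < τ :=
    ((tendsto_cdf_atBot ν).eventually (eventually_lt_nhds hτ0)).exists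
  have hSbdd : BddBelow {y | τ ≤ cdf ν y} := by
    refine ⟨y₀, fun s hs => ?_⟩
    by_contra hlt
    push_neg at hlt
    have := (monotone_cdf ν) hlt.le
    simp only [mem_setOf_eq] at hs
    linarith
  have hTbdd : BddBelow {y | τ < cdf ν y} := by
    refine ⟨y₀, fun s hs => ?_⟩
    by_contra hlt
    push_neg at hlt
    have := (monotone_cdf ν) hlt.le
    simp only [mem_setOf_eq] at hs
    linarith
  have hTne : {y | τ < cdf ν y}.Nonempty :=
    ((tendsto_cdf_atTop ν).eventually (eventually_gt_nhds hτ1)).exists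
  have hSne : {y | τ ≤ cdf ν y}.Nonempty := by
    obtain ⟨y, hy⟩ := hTne
    simp only [mem_setOf_eq] at hy
    exact ⟨y, hy.le⟩
  have hSinf : τ ≤ cdf ν (invCDF ν τ) := by
    have hev : ∀ᶠ y in nhdsWithin (invCDF ν τ) (Ioi (invCDF ν τ)), τ ≤ cdf ν y := by
      filter_upwards [self_mem_nhdsWithin] with y hy
      obtain ⟨s, hs, hsy⟩ := exists_lt_of_csInf_lt hSne hy
      exact le_trans hs ((monotone_cdf ν) hsy.le)
    have htd : Filter.Tendsto (cdf ν) (nhdsWithin (invCDF ν τ) (Ioi (invCDF ν τ)))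
        (nhds (cdf ν (invCDF ν τ))) :=
      ((cdf ν).right_continuous _).mono_left (nhdsWithin_mono _ Ioi_subset_Ici_self)
    exact ge_of_tendsto htd hev
  have c1 : ∀ v : ℝ, (τ ≤ (ν (Iic v)).toReal ↔ invCDF ν τ ≤ v) := by
    intro v
    rw [← measureReal_def, ← cdf_eq_real]
    constructor
    · intro h
      exact csInf_le hSbdd h
    · intro h
      exact le_trans hSinf ((monotone_cdf ν) h)
  have c2 : ∀ v : ℝ, ((ν (Iio v)).toReal ≤ τ ↔ v ≤ upInvCDF ν τ) := by
    intro v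
    constructor
    · intro h
      refine le_csInf hTne fun y hy => ?_
      by_contra hc
      push_neg at hc
      have h1 : (ν (Iic y)).toReal ≤ (ν (Iio v)).toReal :=
        ENNReal.toReal_mono (measure_ne_top ν _)
          (measure_mono fun z hz => lt_of_le_of_lt hz hc)
      rw [← measureReal_def, ← cdf_eq_real] at h1
      simp only [mem_setOf_eq] at hy
      linarith
    · intro h
      refine le_of_tendsto (hIio_lim v) (Filter.Eventually.of_forall fun n => ?_)
      rw [← measureReal_def, ← cdf_eq_real]
      by_contra hc
      push_neg at hc
      have hle : upInvCDF ν τ ≤ v - 1/(n+1 : ℝ) := csInf_le hTbdd hc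
      have hp : (0:ℝ) < 1/(n+1 : ℝ) := by positivity
      linarith
  ext v
  simp only [mem_setOf_eq, mem_Icc, hchar v, c2 v, c1 v]
  tauto
end

section
/- Inward drift of the QTD vector field at large parameter values: fix δ ∈ (0,1) with 1 − δ > γ, and let M > 0 be such that for every state x ∈ X, the reward distribution R^π(x) satisfies F_{R^π(x)}((1−δ−γ)M) > 1 − 1/(4m) and F_{R^π(x)}(−(1−δ−γ)M) < 1/(4m). Then for any θ ∈ ℝ^{X×[m]} with ‖θ‖_∞ > M: (i) if θ(x,i) > (1−δ)·‖θ‖_∞, then τ_i − F_{(T^π θ)(x)}(θ(x,i)−) ≤ −1/(4m); and (ii) if θ(x,i) < −(1−δ)·‖θ‖_∞, then τ_i − F_{(T^π θ)(x)}(θ(x,i)) ≥ 1/(4m). -/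
open MeasureTheory ProbabilityTheory Set
open scoped ENNReal

lemma paramDistOne_apply' {m : ℕ} (z : Fin m → ℝ) {S : Set ℝ} (hS : MeasurableSet S) :
    paramDistOne z S = (m : ℝ≥0∞)⁻¹ * ∑ j : Fin m, S.indicator 1 (z j) := by
  simp [paramDistOne, Measure.smul_apply, Measure.finset_sum_apply,
    Measure.dirac_apply' _ hS, smul_eq_mul]

lemma paramDistOne_isProb {m : ℕ} (hm : 0 < m) (z : Fin m → ℝ) :
    IsProbabilityMeasure (paramDistOne z) := by
  constructor
  rw [paramDistOne_apply' z MeasurableSet.univ]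
  simp only [Set.indicator_univ, Pi.one_apply, Finset.sum_const, Finset.card_univ,
    Fintype.card_fin, nsmul_eq_mul, mul_one]
  rw [ENNReal.inv_mul_cancel (by exact_mod_cast hm.ne') (by simp)]


/-- Inward drift of the QTD vector field at large parameter values: if
`‖θ‖_∞ > M` (for `M` as in the displayed reward-CDF conditions) then near-maximal positive
coordinates have expected update at most `−1/(4m)` (using the left limit of the CDF), and
near-maximal negative coordinates have expected update at least `1/(4m)`. -/
theorem qtd_inward_drift
    {X : Type*} [Fintype X] [MeasurableSpace X] [MeasurableSingletonClass X]
    (P : X → Measure (ℝ × X)) (hP : ∀ x, IsProbabilityMeasure (P x))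
    (hPmean : ∀ x, Integrable (fun p : ℝ × X => p.1) (P x))
    (γ : ℝ) (hγ0 : 0 ≤ γ) (hγ1 : γ < 1) {m : ℕ} (hm : 0 < m)
    (δ : ℝ) (hδ : δ ∈ Set.Ioo (0:ℝ) 1) (hδγ : γ < 1 - δ)
    (M : ℝ) (hM : 0 < M)
    (hR1 : ∀ x, 1 - 1 / (4 * (m:ℝ)) < cdf ((P x).map Prod.fst) ((1 - δ - γ) * M))
    (hR2 : ∀ x, cdf ((P x).map Prod.fst) (-((1 - δ - γ) * M)) < 1 / (4 * (m:ℝ)))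
    (θ : X → Fin m → ℝ) (hθ : M < ‖θ‖) (x : X) (i : Fin m) :
    ((1 - δ) * ‖θ‖ < θ x i →
      qlevel m i -
          Function.leftLim (fun t => cdf (bellman P γ (paramDist θ) x) t) (θ x i)
        ≤ -(1 / (4 * (m:ℝ))))
    ∧ (θ x i < -((1 - δ) * ‖θ‖) →
      1 / (4 * (m:ℝ)) ≤ qlevel m i - cdf (bellman P γ (paramDist θ) x) (θ x i)) := by
  haveI := hP x
  set B := ‖θ‖ with hBdef
  have hB0 : 0 < B := hM.trans hθ
  have hatom : ∀ (y : X) (j : Fin m), |θ y j| ≤ B := by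
    intro y j
    calc |θ y j| = ‖θ y j‖ := rfl
    _ ≤ ‖θ y‖ := norm_le_pi_norm (θ y) j
    _ ≤ ‖θ‖ := norm_le_pi_norm θ y
  set κ : ℝ × X → Measure ℝ :=
    fun p => (paramDistOne (θ p.2)).map (fun z => p.1 + γ * z) with hκdef
  haveI hκprob : ∀ p, IsProbabilityMeasure (κ p) := fun p => by
    haveI := paramDistOne_isProb hm (θ p.2)
    exact Measure.isProbabilityMeasure_map (by fun_prop)
  have hκIic : ∀ (p : ℝ × X) (t : ℝ),
      κ p (Iic t) = (m : ℝ≥0∞)⁻¹ * ∑ j : Fin m, (Iic t).indicator 1 (p.1 + γ * θ p.2 j) := by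
    intro p t
    rw [hκdef]
    rw [Measure.map_apply (by fun_prop) measurableSet_Iic,
      paramDistOne_apply' _ ((measurableSet_Iic (a := t)).preimage (by fun_prop))]
    refine congrArg _ (Finset.sum_congr rfl fun j _ => ?_)
    by_cases h : p.1 + γ * θ p.2 j ≤ t <;> simp [Set.indicator_apply, h]
  have hκmeas : Measurable κ := by
    apply Measure.measurable_of_measurable_coe
    intro s hs
    have heq : (fun p : ℝ × X => κ p s)
        = fun p => (paramDistOne (θ p.2)) ((fun z => p.1 + γ * z) ⁻¹' s) := by
      funext p
      rw [hκdef]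
      exact Measure.map_apply (by fun_prop) hs
    rw [heq]
    have heq2 : (fun p : ℝ × X => (paramDistOne (θ p.2)) ((fun z => p.1 + γ * z) ⁻¹' s))
        = fun p => (m : ℝ≥0∞)⁻¹ * ∑ j : Fin m, s.indicator 1 (p.1 + γ * θ p.2 j) := by
      funext p
      rw [paramDistOne_apply' _ (hs.preimage (by fun_prop))]
      refine congrArg _ (Finset.sum_congr rfl fun j _ => ?_)
      by_cases h : p.1 + γ * θ p.2 j ∈ s <;> simp [Set.indicator_apply, h]
    rw [heq2]
    refine Measurable.const_mul (Finset.measurable_sum _ fun j _ => ?_) _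
    have hg : Measurable (fun p : ℝ × X => p.1 + γ * θ p.2 j) := by
      exact measurable_fst.add
        (measurable_const.mul ((measurable_of_countable (fun y => θ y j)).comp measurable_snd))
    exact (measurable_one.indicator hs).comp hg
  have hbell : bellman P γ (paramDist θ) x = (P x).bind κ := rfl
  have hbind : ∀ t : ℝ, bellman P γ (paramDist θ) x (Iic t) = ∫⁻ p, κ p (Iic t) ∂(P x) := by
    intro t
    rw [hbell]
    exact Measure.bind_apply measurableSet_Iic hκmeas.aemeasurable
  haveI hνprob : IsProbabilityMeasure (bellman P γ (paramDist θ) x) := by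
    constructor
    rw [hbell, Measure.bind_apply MeasurableSet.univ hκmeas.aemeasurable]
    simp [measure_univ]
  haveI hRprob : IsProbabilityMeasure ((P x).map Prod.fst) :=
    Measure.isProbabilityMeasure_map measurable_fst.aemeasurable
  -- lower bound: ν(Iic t) ≥ reward cdf at t - γB
  have hlow : ∀ t : ℝ, ((P x).map Prod.fst) (Iic (t - γ * B)) ≤
      bellman P γ (paramDist θ) x (Iic t) := by
    intro t
    rw [hbind, Measure.map_apply measurable_fst measurableSet_Iic]
    have hSmeas : MeasurableSet (Prod.fst ⁻¹' (Iic (t - γ * B)) : Set (ℝ × X)) :=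
      measurable_fst measurableSet_Iic
    rw [← lintegral_indicator_one hSmeas]
    refine lintegral_mono fun p => ?_
    by_cases hp : p ∈ (Prod.fst ⁻¹' (Iic (t - γ * B)) : Set (ℝ × X))
    · rw [Set.indicator_of_mem hp, hκIic]
      have hall : ∀ j : Fin m, (Iic t).indicator (1 : ℝ → ℝ≥0∞) (p.1 + γ * θ p.2 j) = 1 := by
        intro j
        have h1 : p.1 ≤ t - γ * B := hp
        have h2 : γ * θ p.2 j ≤ γ * B := by
          have := (abs_le.mp (hatom p.2 j)).2
          nlinarith
        have : p.1 + γ * θ p.2 j ≤ t := by linarith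
        simp [Set.indicator_of_mem, this]
      rw [Finset.sum_congr rfl fun j _ => hall j]
      simp only [Finset.sum_const, Finset.card_univ, Fintype.card_fin, nsmul_eq_mul, mul_one]
      rw [ENNReal.inv_mul_cancel (by exact_mod_cast hm.ne') (by simp)]
      simp
    · rw [Set.indicator_of_notMem hp]; exact zero_le
  -- upper bound: ν(Iic t) ≤ reward cdf at t + γB
  have hhigh : ∀ t : ℝ, bellman P γ (paramDist θ) x (Iic t) ≤
      ((P x).map Prod.fst) (Iic (t + γ * B)) := by
    intro t
    rw [hbind, Measure.map_apply measurable_fst measurableSet_Iic]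
    have hSmeas : MeasurableSet (Prod.fst ⁻¹' (Iic (t + γ * B)) : Set (ℝ × X)) :=
      measurable_fst measurableSet_Iic
    rw [← lintegral_indicator_one hSmeas]
    refine lintegral_mono fun p => ?_
    by_cases hp : p ∈ (Prod.fst ⁻¹' (Iic (t + γ * B)) : Set (ℝ × X))
    · rw [Set.indicator_of_mem hp]
      exact prob_le_one
    · rw [Set.indicator_of_notMem hp, hκIic]
      have hall : ∀ j : Fin m, (Iic t).indicator (1 : ℝ → ℝ≥0∞) (p.1 + γ * θ p.2 j) = 0 := by
        intro j
        have h1 : ¬ p.1 ≤ t + γ * B := hp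
        have h2 : -(γ * B) ≤ γ * θ p.2 j := by
          have := (abs_le.mp (hatom p.2 j)).1
          nlinarith
        have : ¬ p.1 + γ * θ p.2 j ≤ t := by push_neg at h1 ⊢; linarith
        simp [Set.indicator_apply, this]
      rw [Finset.sum_congr rfl fun j _ => hall j]
      simp
  -- cdf versions
  have hlowc : ∀ t : ℝ, cdf ((P x).map Prod.fst) (t - γ * B) ≤ cdf (bellman P γ (paramDist θ) x) t := by
    intro t
    rw [cdf_eq_real, cdf_eq_real]
    exact ENNReal.toReal_mono (measure_ne_top _ _) (hlow t)
  have hhighc : ∀ t : ℝ, cdf (bellman P γ (paramDist θ) x) t ≤ cdf ((P x).map Prod.fst) (t + γ * B) := by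
    intro t
    rw [cdf_eq_real, cdf_eq_real]
    exact ENNReal.toReal_mono (measure_ne_top _ _) (hhigh t)
  have hm' : (0:ℝ) < m := by exact_mod_cast hm
  have hq1 : qlevel m i ≤ 1 - 1 / (2 * m) := by
    rw [qlevel, div_le_iff₀ (by positivity)]
    have : (i:ℝ) + 1 ≤ m := by exact_mod_cast i.isLt
    have h2m : (0:ℝ) < 2 * m := by positivity
    field_simp
    nlinarith
  have hq2 : 1 / (2 * (m:ℝ)) ≤ qlevel m i := by
    rw [qlevel]
    rw [div_le_div_iff₀ (by positivity) (by positivity)]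
    have hi0 : (0:ℝ) ≤ (i : ℝ) := by positivity
    nlinarith
  have hhalf : 1 / (2 * (m:ℝ)) - 1 / (4 * m) = 1 / (4 * m) := by
    field_simp
    ring
  constructor
  · intro hpos
    set s : ℝ := (1 - δ - γ) * M + γ * B with hsdef
    have hs : s < θ x i := by
      have h1 : (1 - δ - γ) * M < (1 - δ - γ) * B := by
        have : 0 < 1 - δ - γ := by linarith
        nlinarith
      have : s < (1 - δ) * B := by rw [hsdef]; nlinarith
      linarith
    have hmono : Monotone (fun t => cdf (bellman P γ (paramDist θ) x) t) :=
      (cdf (bellman P γ (paramDist θ) x)).mono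
    have hll : cdf (bellman P γ (paramDist θ) x) s ≤
        Function.leftLim (fun t => cdf (bellman P γ (paramDist θ) x) t) (θ x i) :=
      hmono.le_leftLim hs
    have hcs : cdf ((P x).map Prod.fst) ((1 - δ - γ) * M) ≤ cdf (bellman P γ (paramDist θ) x) s := by
      have := hlowc s
      rw [show s - γ * B = (1 - δ - γ) * M by rw [hsdef]; ring] at this
      exact this
    have := hR1 x
    linarith
  · intro hneg
    have hkey : θ x i + γ * B ≤ -((1 - δ - γ) * M) := by
      have h1 : (1 - δ - γ) * M < (1 - δ - γ) * B := by
        have : 0 < 1 - δ - γ := by linarith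
        nlinarith
      nlinarith
    have hc : cdf (bellman P γ (paramDist θ) x) (θ x i) ≤
        cdf ((P x).map Prod.fst) (-((1 - δ - γ) * M)) :=
      (hhighc (θ x i)).trans (((cdf ((P x).map Prod.fst)).mono) hkey)
    have := hR2 x
    linarith
end
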